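/- Let s ≥ 1 be an integer and let G be a simple graph on n vertices with m edges and independence number α(G) ≤ s. Then 3s³·t(G) ≥ m·(s(n−s) − s³), where t(G) is the number of triangles in G. -/

import Mathlib

open Finset SimpleGraph

/-- The distance matrix of a simple graph on `Fin n`, as a real matrix: the
`(i,j)` entry is the graph distance `d_G(i,j)`. -/
noncomputable def distMatrix {n : ℕ} (G : SimpleGraph (Fin n)) :
    Matrix (Fin n) (Fin n) ℝ :=
  fun i j => (G.dist i j : ℝ)

/-- The eigenvalues of the distance matrix, listed in decreasing order. -/
noncomputable def distEigList {n : ℕ} (G : SimpleGraph (Fin n)) : List ℝ :=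
  if h : (distMatrix G).IsHermitian then
    (List.ofFn h.eigenvalues).insertionSort (· ≥ ·)
  else []

/-- `distEig G k` is the `k`-th largest distance eigenvalue `λ_k(D(G))` (`1`-indexed). -/
noncomputable def distEig {n : ℕ} (G : SimpleGraph (Fin n)) (k : ℕ) : ℝ :=
  (distEigList G).getD (k - 1) 0

/-- `S_k(D(G))`, the sum of the `k` largest distance eigenvalues. -/
noncomputable def distEigSum {n : ℕ} (G : SimpleGraph (Fin n)) (k : ℕ) : ℝ :=
  ((distEigList G).take k).sum

/-- `G` has independence number at most `s`: every set of pairwise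
nonadjacent vertices has at most `s` elements. -/
def IndepNumLE {V : Type*} (G : SimpleGraph V) (s : ℕ) : Prop :=
  ∀ S : Finset V, (∀ u ∈ S, ∀ v ∈ S, u ≠ v → ¬ G.Adj u v) → S.card ≤ s

/-- Caro–Wei: within any finset `A` there is an independent set of size at least
`∑_{a ∈ A} 1/(d_A(a)+1)`. -/
lemma caro_wei {V : Type*} [DecidableEq V] (G : SimpleGraph V) [DecidableRel G.Adj]
    (A : Finset V) :
    ∃ I : Finset V, I ⊆ A ∧ (∀ u ∈ I, ∀ v ∈ I, u ≠ v → ¬ G.Adj u v) ∧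
      ∑ a ∈ A, (1 : ℝ) / (((A.filter (G.Adj a)).card : ℝ) + 1) ≤ I.card := by
  induction A using Finset.strongInduction with
  | _ A ih =>
    rcases A.eq_empty_or_nonempty with rfl | hne
    · exact ⟨∅, by simp⟩
    obtain ⟨x, hxA, hxmin⟩ := A.exists_min_image (fun a => (A.filter (G.Adj a)).card) hne
    set C : Finset V := insert x (A.filter (G.Adj x)) with hC
    have hCA : C ⊆ A := insert_subset hxA (filter_subset _ _)
    have hssub : A \ C ⊂ A :=
      Finset.sdiff_ssubset hCA ⟨x, mem_insert_self _ _⟩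
    obtain ⟨I', hI'sub, hI'ind, hI'sum⟩ := ih _ hssub
    have hxnotI' : x ∉ I' := fun hx => (mem_sdiff.1 (hI'sub hx)).2 (mem_insert_self _ _)
    have hnonadj : ∀ a ∈ I', ¬ G.Adj x a := by
      intro a ha hadj
      exact (mem_sdiff.1 (hI'sub ha)).2
        (mem_insert_of_mem (mem_filter.2 ⟨(mem_sdiff.1 (hI'sub ha)).1, hadj⟩))
    refine ⟨insert x I', insert_subset hxA ((hI'sub.trans (sdiff_subset)).trans le_rfl), ?_, ?_⟩
    · intro u hu v hv huv
      rcases mem_insert.1 hu with h1 | h1 <;> rcases mem_insert.1 hv with h2 | h2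
      · exact absurd (h1.trans h2.symm) huv
      · subst h1; exact hnonadj v h2
      · subst h2; exact fun h => hnonadj u h1 h.symm
      · exact hI'ind u h1 v h2 huv
    · have hcardC : (C.card : ℝ) = ((A.filter (G.Adj x)).card : ℝ) + 1 := by
        rw [hC, Finset.card_insert_of_notMem (by simp [G.irrefl])]
        push_cast; ring
      have hsplit : ∑ a ∈ A, (1 : ℝ) / (((A.filter (G.Adj a)).card : ℝ) + 1)
          = ∑ a ∈ A \ C, (1 : ℝ) / (((A.filter (G.Adj a)).card : ℝ) + 1)
            + ∑ a ∈ C, (1 : ℝ) / (((A.filter (G.Adj a)).card : ℝ) + 1) :=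
        (Finset.sum_sdiff hCA).symm
      have h1 : ∑ a ∈ A \ C, (1 : ℝ) / (((A.filter (G.Adj a)).card : ℝ) + 1)
          ≤ ∑ a ∈ A \ C, (1 : ℝ) / ((((A \ C).filter (G.Adj a)).card : ℝ) + 1) := by
        refine Finset.sum_le_sum fun a _ => ?_
        apply one_div_le_one_div_of_le (by positivity)
        have : ((A \ C).filter (G.Adj a)).card ≤ (A.filter (G.Adj a)).card :=
          Finset.card_le_card (Finset.filter_subset_filter _ (sdiff_subset))
        push_cast
        exact_mod_cast add_le_add_left (Nat.cast_le.2 this) 1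
      have h2 : ∑ a ∈ C, (1 : ℝ) / (((A.filter (G.Adj a)).card : ℝ) + 1) ≤ 1 := by
        have : ∀ a ∈ C, (1 : ℝ) / (((A.filter (G.Adj a)).card : ℝ) + 1)
            ≤ 1 / (((A.filter (G.Adj x)).card : ℝ) + 1) := by
          intro a ha
          apply one_div_le_one_div_of_le (by positivity)
          exact_mod_cast add_le_add_left (Nat.cast_le.2 (hxmin a (hCA ha))) 1
        calc ∑ a ∈ C, (1 : ℝ) / (((A.filter (G.Adj a)).card : ℝ) + 1)
            ≤ ∑ _a ∈ C, (1:ℝ) / (((A.filter (G.Adj x)).card : ℝ) + 1) :=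
              Finset.sum_le_sum this
          _ = (C.card : ℝ) * ((1:ℝ) / (((A.filter (G.Adj x)).card : ℝ) + 1)) := by
              rw [Finset.sum_const, nsmul_eq_mul]
          _ = 1 := by
              rw [hcardC]; field_simp
      rw [hsplit, Finset.card_insert_of_notMem hxnotI']
      push_cast
      linarith

/-- Cauchy–Schwarz + Caro–Wei : `|A|² ≤ s · ∑_{a∈A} (d_A(a)+1)`. -/
lemma cs_step {V : Type*} [DecidableEq V] {s : ℕ} (G : SimpleGraph V) [DecidableRel G.Adj]
    (hα : IndepNumLE G s) (A : Finset V) :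
    ((A.card : ℝ)) ^ 2 ≤ (s : ℝ) * ∑ a ∈ A, (((A.filter (G.Adj a)).card : ℝ) + 1) := by
  obtain ⟨I, hIA, hInd, hIsum⟩ := caro_wei G A
  have hIs : (I.card : ℝ) ≤ s := Nat.cast_le.2 (hα I hInd)
  have hcs : ((A.card : ℝ)) ^ 2 ≤
      (∑ a ∈ A, (1 : ℝ) / (((A.filter (G.Adj a)).card : ℝ) + 1)) *
        ∑ a ∈ A, (((A.filter (G.Adj a)).card : ℝ) + 1) := by
    have := Finset.sum_sq_le_sum_mul_sum_of_sq_eq_mul A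
      (r := fun _ => (1:ℝ))
      (f := fun a => (1 : ℝ) / (((A.filter (G.Adj a)).card : ℝ) + 1))
      (g := fun a => (((A.filter (G.Adj a)).card : ℝ) + 1))
      (fun a _ => by positivity) (fun a _ => by positivity)
      (fun a _ => by
        have h : (((A.filter (G.Adj a)).card : ℝ) + 1) ≠ 0 := by positivity
        field_simp)
    simpa using this
  have hnn : (0:ℝ) ≤ ∑ a ∈ A, (((A.filter (G.Adj a)).card : ℝ) + 1) :=
    Finset.sum_nonneg fun a _ => by positivity
  calc ((A.card : ℝ)) ^ 2 ≤ _ := hcs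
    _ ≤ (I.card : ℝ) * ∑ a ∈ A, (((A.filter (G.Adj a)).card : ℝ) + 1) :=
        mul_le_mul_of_nonneg_right hIsum hnn
    _ ≤ (s : ℝ) * ∑ a ∈ A, (((A.filter (G.Adj a)).card : ℝ) + 1) :=
        mul_le_mul_of_nonneg_right hIs hnn

/-- Counting ordered triangles: the sum over `v` of the number of ordered adjacent pairs
inside `N(v)` is at most `6` times the number of triangles. -/
lemma tri_count {n : ℕ} (G : SimpleGraph (Fin n)) [DecidableRel G.Adj] :
    ∑ v : Fin n, ∑ a ∈ G.neighborFinset v, ((G.neighborFinset v).filter (G.Adj a)).card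
      ≤ 6 * (G.cliqueFinset 3).card := by
  classical
  set T : Finset (Fin n × Fin n × Fin n) :=
    Finset.univ.filter (fun p => G.Adj p.1 p.2.1 ∧ G.Adj p.1 p.2.2 ∧ G.Adj p.2.1 p.2.2) with hT
  have hcard : ∑ v : Fin n, ∑ a ∈ G.neighborFinset v,
      ((G.neighborFinset v).filter (G.Adj a)).card = T.card := by
    rw [hT, Finset.card_filter, Fintype.sum_prod_type]
    refine Finset.sum_congr rfl fun v _ => ?_
    rw [Fintype.sum_prod_type]
    rw [neighborFinset_eq_filter, Finset.sum_filter]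
    refine Finset.sum_congr rfl fun a _ => ?_
    rw [Finset.filter_filter, Finset.card_filter]
    by_cases hva : G.Adj v a
    · simp only [hva, if_true, true_and]
    · simp [hva]
  rw [hcard]
  apply Finset.card_le_mul_card_image_of_maps_to
    (f := fun p : Fin n × Fin n × Fin n => ({p.1, p.2.1, p.2.2} : Finset (Fin n)))
    (t := G.cliqueFinset 3)
  · rintro ⟨v, a, b⟩ hp
    simp only [hT, Finset.mem_filter] at hp
    obtain ⟨-, h1, h2, h3⟩ := hp
    exact mem_cliqueFinset_iff.2 (is3Clique_triple_iff.2 ⟨h1, h2, h3⟩)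
  · intro S hS
    obtain ⟨x, y, z, hxy, hxz, hyz, rfl⟩ :=
      Finset.card_eq_three.1 (mem_cliqueFinset_iff.1 hS).card_eq
    have hsub : {p ∈ T | (fun p : Fin n × Fin n × Fin n =>
        ({p.1, p.2.1, p.2.2} : Finset (Fin n))) p = {x, y, z}} ⊆
        ({(x,y,z),(x,z,y),(y,x,z),(y,z,x),(z,x,y),(z,y,x)} :
          Finset (Fin n × Fin n × Fin n)) := by
      rintro ⟨u, v, w⟩ hp
      simp only [hT, Finset.mem_filter, Finset.mem_univ, true_and] at hp
      obtain ⟨⟨h1, h2, h3⟩, hset⟩ := hp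
      have hu : u = x ∨ u = y ∨ u = z := by
        have : u ∈ ({x, y, z} : Finset (Fin n)) := hset ▸ (by simp)
        simpa using this
      have hv : v = x ∨ v = y ∨ v = z := by
        have : v ∈ ({x, y, z} : Finset (Fin n)) := hset ▸ (by simp)
        simpa using this
      have hw : w = x ∨ w = y ∨ w = z := by
        have : w ∈ ({x, y, z} : Finset (Fin n)) := hset ▸ (by simp)
        simpa using this
      have huv : u ≠ v := G.ne_of_adj h1
      have huw : u ≠ w := G.ne_of_adj h2
      have hvw : v ≠ w := G.ne_of_adj h3
      simp only [Finset.mem_insert, Finset.mem_singleton, Prod.mk.injEq]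
      rcases hu with rfl | rfl | rfl <;> rcases hv with rfl | rfl | rfl <;>
        rcases hw with rfl | rfl | rfl <;> simp_all
    calc ({p ∈ T | (fun p : Fin n × Fin n × Fin n =>
          ({p.1, p.2.1, p.2.2} : Finset (Fin n))) p = {x, y, z}}).card
        ≤ _ := Finset.card_le_card hsub
      _ ≤ 6 := by
          refine le_trans (Finset.card_insert_le _ _) ?_
          refine Nat.succ_le_succ ?_
          refine le_trans (Finset.card_insert_le _ _) ?_
          refine Nat.succ_le_succ ?_
          refine le_trans (Finset.card_insert_le _ _) ?_
          refine Nat.succ_le_succ ?_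
          refine le_trans (Finset.card_insert_le _ _) ?_
          refine Nat.succ_le_succ ?_
          refine le_trans (Finset.card_insert_le _ _) ?_
          refine Nat.succ_le_succ ?_
          simp

theorem triangle_count_edges_lower_bound {n s : ℕ} (hs : 1 ≤ s)
    (G : SimpleGraph (Fin n)) [DecidableRel G.Adj] (hα : IndepNumLE G s) :
    3 * (s : ℝ) ^ 3 * ((G.cliqueFinset 3).card : ℝ) ≥
      (G.edgeFinset.card : ℝ) * ((s : ℝ) * ((n : ℝ) - s) - (s : ℝ) ^ 3) := by
  classical
  set m : ℝ := (G.edgeFinset.card : ℝ) with hm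
  set t : ℝ := ((G.cliqueFinset 3).card : ℝ) with ht
  have hm0 : 0 ≤ m := Nat.cast_nonneg _
  have ht0 : 0 ≤ t := Nat.cast_nonneg _
  have hs1 : (1:ℝ) ≤ s := by exact_mod_cast hs
  rcases Nat.eq_zero_or_pos n with rfl | hn
  · push_cast
    have h1 : m * ((s:ℝ) * (0 - s) - s^3) ≤ 0 := by
      nlinarith [mul_nonneg hm0 (show (0:ℝ) ≤ (s:ℝ)^2 + (s:ℝ)^3 by positivity)]
    nlinarith [mul_nonneg (mul_nonneg (show (0:ℝ) ≤ 3 by norm_num)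
      (show (0:ℝ) ≤ (s:ℝ)^3 by positivity)) ht0]
  have hn0 : (0:ℝ) < n := by exact_mod_cast hn
  have hdegf : ∀ a : Fin n, (Finset.univ.filter (G.Adj a)).card = G.degree a := fun a => by
    rw [← neighborFinset_eq_filter]; rfl
  have hdegsum : ∑ v : Fin n, (G.degree v : ℝ) = 2 * m := by
    rw [hm]
    exact_mod_cast congrArg (Nat.cast : ℕ → ℝ) G.sum_degrees_eq_twice_card_edges
  have hA : (n:ℝ)^2 ≤ s * (2*m + n) := by
    have h := cs_step G hα (Finset.univ (α := Fin n))
    have e1 : (((Finset.univ (α := Fin n)).card : ℝ)) = n := by simp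
    have e2 : ∑ a ∈ (Finset.univ (α := Fin n)),
        (((Finset.univ.filter (G.Adj a)).card : ℝ) + 1) = 2*m + n := by
      rw [Finset.sum_add_distrib]
      simp only [hdegf, hdegsum]
      simp
    rw [e1, e2] at h
    exact h
  have hB : ∀ v : Fin n, ((G.degree v : ℝ))^2 ≤ s *
      ((∑ a ∈ G.neighborFinset v, (((G.neighborFinset v).filter (G.Adj a)).card : ℝ))
        + G.degree v) := by
    intro v
    have h := cs_step G hα (G.neighborFinset v)
    rw [Finset.sum_add_distrib] at h
    simpa [SimpleGraph.card_neighborFinset_eq_degree] using h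
  have h6 : (∑ v : Fin n, ∑ a ∈ G.neighborFinset v,
      (((G.neighborFinset v).filter (G.Adj a)).card : ℝ)) ≤ 6 * t := by
    have h := tri_count G
    calc (∑ v : Fin n, ∑ a ∈ G.neighborFinset v,
        (((G.neighborFinset v).filter (G.Adj a)).card : ℝ))
        = ((∑ v : Fin n, ∑ a ∈ G.neighborFinset v,
            ((G.neighborFinset v).filter (G.Adj a)).card : ℕ) : ℝ) := by push_cast; rfl
      _ ≤ ((6 * (G.cliqueFinset 3).card : ℕ) : ℝ) := Nat.cast_le.2 h
      _ = 6 * t := by rw [ht]; push_cast; ring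
  have hsumB : ∑ v : Fin n, ((G.degree v : ℝ))^2 ≤ s * (6*t + 2*m) := by
    have hstep : ∑ v : Fin n, ((G.degree v : ℝ))^2 ≤
        ∑ v : Fin n, (s:ℝ) * ((∑ a ∈ G.neighborFinset v,
          (((G.neighborFinset v).filter (G.Adj a)).card : ℝ)) + G.degree v) :=
      Finset.sum_le_sum fun v _ => hB v
    have heq : ∑ v : Fin n, (s:ℝ) * ((∑ a ∈ G.neighborFinset v,
          (((G.neighborFinset v).filter (G.Adj a)).card : ℝ)) + G.degree v)
        = s * ((∑ v : Fin n, ∑ a ∈ G.neighborFinset v,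
            (((G.neighborFinset v).filter (G.Adj a)).card : ℝ)) + 2*m) := by
      rw [← Finset.mul_sum, Finset.sum_add_distrib, hdegsum]
    have hs0 : (0:ℝ) ≤ s := by positivity
    calc ∑ v : Fin n, ((G.degree v : ℝ))^2 ≤ _ := hstep
      _ = _ := heq
      _ ≤ s * (6*t + 2*m) := by nlinarith [h6]
  have hC : (2*m)^2 ≤ n * ∑ v : Fin n, ((G.degree v : ℝ))^2 := by
    have h := sq_sum_le_card_mul_sum_sq (s := (Finset.univ : Finset (Fin n)))
      (f := fun v : Fin n => (G.degree v : ℝ))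
    rw [hdegsum] at h
    simpa using h
  have e1 : (2*m)^2 ≤ n * (s * (6*t + 2*m)) :=
    hC.trans (mul_le_mul_of_nonneg_left hsumB hn0.le)
  have e2 : (n:ℝ) * (n - s) ≤ 2*m*s := by nlinarith [hA]
  have e3 : 2*m*((n:ℝ)*(n - s)) ≤ 2*m*(2*m*s) :=
    mul_le_mul_of_nonneg_left e2 (by linarith)
  have e1s : (s:ℝ) * (2*m)^2 ≤ s * (n * (s * (6*t+2*m))) :=
    mul_le_mul_of_nonneg_left e1 (by positivity)
  have e4 : (n:ℝ) * (2*m*(n-s)) ≤ n * ((s:ℝ)^2 * (6*t+2*m)) := by nlinarith [e3, e1s]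
  have e5 : 2*m*((n:ℝ)-s) ≤ (s:ℝ)^2 * (6*t+2*m) := (mul_le_mul_iff_right₀ hn0).1 e4
  nlinarith [mul_le_mul_of_nonneg_left e5 (show (0:ℝ) ≤ s by positivity)]
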